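/- (Diagonal band estimate.) Let σ, ω be Radon measures on ℝ, let r ≥ 0 be an integer, and let (T, T*) be a formal operator pair such that |⟨T(σ·h_I^σ), h_J^ω⟩_ω| ≤ C₃ for all I, J ∈ 𝒟 with 2^{-r}|I| ≤ |J| ≤ 2^r|I| and J ⊆ I^{(r)}. Then for every f ∈ L²(σ) and g ∈ L²(ω): Σ_{(I,J)} |⟨f, h_I^σ⟩_σ|·|⟨g, h_J^ω⟩_ω|·|⟨T(σ·h_I^σ), h_J^ω⟩_ω| ≤ (2^{2r+1} − 1)·C₃·‖f‖_{L²(σ)}·‖g‖_{L²(ω)}, where the sum runs over all pairs (I, J) ∈ 𝒟 × 𝒟 with 2^{-r}|I| ≤ |J| ≤ 2^r|I| and J ⊆ I^{(r)}. -/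

import Mathlib

open MeasureTheory Set Filter
open scoped Classical

noncomputable section

/-- The dyadic interval `[2^k m, 2^k (m+1))`. -/
def dy (k m : ℤ) : Set ℝ := Set.Ico ((2:ℝ)^k * m) ((2:ℝ)^k * (m+1))

/-- The left half of the dyadic interval. -/
def dyL (k m : ℤ) : Set ℝ := dy (k-1) (2*m)

/-- The right half of the dyadic interval. -/
def dyR (k m : ℤ) : Set ℝ := dy (k-1) (2*m+1)

/-- `I^{(r)}`: the dyadic interval of length `2^r |I|` containing `I = dy k m`. -/
def dyUp (r : ℕ) (k m : ℤ) : Set ℝ := dy (k + r) (Int.fdiv m (2^r))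

/-- The pairing `⟨f, g⟩_μ = ∫ f g dμ`. -/
def ip (μ : Measure ℝ) (f g : ℝ → ℝ) : ℝ := ∫ x, f x * g x ∂μ

/-- The `L²(μ)` norm. -/
def nrm (μ : Measure ℝ) (f : ℝ → ℝ) : ℝ := Real.sqrt (∫ x, f x ^ 2 ∂μ)

/-- The average `⟨f⟩_s^μ = μ(s)⁻¹ ∫_s f dμ`. -/
def avg (μ : Measure ℝ) (s : Set ℝ) (f : ℝ → ℝ) : ℝ := (μ s).toReal⁻¹ * ∫ x in s, f x ∂μ

/-- The weight-adapted Haar function `h_I^σ` for `I = dy k m`. -/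
def haarW (σ : Measure ℝ) (k m : ℤ) : ℝ → ℝ :=
  if σ (dyL k m) ≠ 0 ∧ σ (dyR k m) ≠ 0 then
    fun x =>
      Real.sqrt ((σ (dyL k m)).toReal / ((σ (dy k m)).toReal * (σ (dyR k m)).toReal))
          * (dyR k m).indicator 1 x
        - Real.sqrt ((σ (dyR k m)).toReal / ((σ (dy k m)).toReal * (σ (dyL k m)).toReal))
          * (dyL k m).indicator 1 x
  else 0

/-- The martingale difference `Δ_I^σ f = ⟨f, h_I^σ⟩_σ · h_I^σ`. -/
def mdiff (σ : Measure ℝ) (k m : ℤ) (f : ℝ → ℝ) : ℝ → ℝ :=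
  fun x => ip σ f (haarW σ k m) * haarW σ k m x

/-- `𝒮`: the linear span of the indicators of dyadic intervals. -/
def simpleSpan : Submodule ℝ (ℝ → ℝ) :=
  Submodule.span ℝ {f : ℝ → ℝ | ∃ k m : ℤ, f = (dy k m).indicator 1}

/-- A formal operator pair `(T, T*)`: linear maps with `T` sending `𝒮_σ` into `L²(ω)`,
`T*` sending `𝒮_ω` into `L²(σ)`, satisfying the duality relation
`⟨T(σf), g⟩_ω = ⟨f, T*(ωg)⟩_σ` on the spans of indicators.  We write `P.T f` for `T(σf)`
and `P.Ts g` for `T*(ωg)`. -/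
structure FormalPair (σ ω : Measure ℝ) where
  T : (ℝ → ℝ) →ₗ[ℝ] (ℝ → ℝ)
  Ts : (ℝ → ℝ) →ₗ[ℝ] (ℝ → ℝ)
  memT : ∀ f ∈ simpleSpan, MemLp (T f) 2 ω
  memTs : ∀ g ∈ simpleSpan, MemLp (Ts g) 2 σ
  adj : ∀ f ∈ simpleSpan, ∀ g ∈ simpleSpan, ∫ x, T f x * g x ∂ω = ∫ x, f x * Ts g x ∂σ

/-- `(T, T*)` is essentially well localized with parameter `r`. -/
def EWL {σ ω : Measure ℝ} (P : FormalPair σ ω) (r : ℕ) : Prop :=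
  ∀ k m : ℤ,
    (∀ᵐ x ∂ω, x ∉ dyUp r k m → P.T (haarW σ k m) x = 0) ∧
    (∀ᵐ x ∂σ, x ∉ dyUp r k m → P.Ts (haarW ω k m) x = 0)


-- ## Auxiliary lemmas



lemma two_zpow_pos (k : ℤ) : (0:ℝ) < 2^k := by positivity

lemma two_zpow_half (k : ℤ) : (2:ℝ)^(k-1) * 2 = 2^k := by
  rw [zpow_sub₀ (two_ne_zero : (2:ℝ) ≠ 0)]
  simp

lemma dy_nonempty (k m : ℤ) : (dy k m).Nonempty := by
  refine ⟨(2:ℝ)^k * m, le_refl _, ?_⟩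
  have := two_zpow_pos k
  nlinarith

lemma dy_mble (k m : ℤ) : MeasurableSet (dy k m) := measurableSet_Ico

lemma dy_union (k m : ℤ) : dy k m = dyL k m ∪ dyR k m := by
  have h := two_zpow_half k
  ext x
  simp only [dy, dyL, dyR, Set.mem_Ico, Set.mem_union]
  push_cast
  rw [← h]
  constructor
  · rintro ⟨h1, h2⟩
    by_cases hx : x < (2:ℝ)^(k-1) * (2*m+1)
    · exact Or.inl ⟨by nlinarith, hx⟩
    · exact Or.inr ⟨le_of_not_gt hx, by nlinarith⟩
  · rintro (⟨h1, h2⟩ | ⟨h1, h2⟩) <;> constructor <;> nlinarith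

lemma dyLR_disj (k m : ℤ) : Disjoint (dyL k m) (dyR k m) := by
  rw [Set.disjoint_left]
  intro x hx hx'
  simp only [dyL, dyR, dy, Set.mem_Ico] at hx hx'
  push_cast at hx hx'
  nlinarith [hx.2, hx'.1]

lemma dyL_subset (k m : ℤ) : dyL k m ⊆ dy k m := by
  rw [dy_union k m]; exact Set.subset_union_left

lemma dyR_subset (k m : ℤ) : dyR k m ⊆ dy k m := by
  rw [dy_union k m]; exact Set.subset_union_right

lemma dy_disj (k : ℤ) {m u : ℤ} (h : m ≠ u) : Disjoint (dy k m) (dy k u) := by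
  rw [Set.disjoint_left]
  intro x hx hx'
  simp only [dy, Set.mem_Ico] at hx hx'
  have hp := two_zpow_pos k
  have h1 : (m:ℝ) < u + 1 := by nlinarith [hx.1, hx'.2]
  have h2 : (u:ℝ) < m + 1 := by nlinarith [hx'.1, hx.2]
  have h1' : m ≤ u := by exact_mod_cast Int.lt_add_one_iff.mp (by exact_mod_cast h1)
  have h2' : u ≤ m := by exact_mod_cast Int.lt_add_one_iff.mp (by exact_mod_cast h2)
  exact h (le_antisymm h1' h2')

lemma fdiv_bounds (m : ℤ) (t : ℕ) :
    (m.fdiv (2^t)) * 2^t ≤ m ∧ m < (m.fdiv (2^t) + 1) * 2^t := by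
  have h2 : (0:ℤ) < 2^t := by positivity
  rw [Int.fdiv_eq_ediv_of_nonneg m (le_of_lt h2)]
  have h3 := Int.mul_ediv_add_emod m (2^t)
  have h4 := Int.emod_nonneg m (ne_of_gt h2)
  have h5 := Int.emod_lt_of_pos m h2
  constructor <;> nlinarith

lemma dy_subset (k m : ℤ) (t : ℕ) : dy k m ⊆ dy (k+t) (m.fdiv (2^t)) := by
  obtain ⟨h1, h2⟩ := fdiv_bounds m t
  intro x hx
  simp only [dy, Set.mem_Ico] at hx ⊢
  have hzp : (2:ℝ)^(k + (t:ℤ)) = 2^k * 2^t := by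
    rw [zpow_add₀ (two_ne_zero : (2:ℝ) ≠ 0)]
    norm_num [zpow_natCast]
  have hp := two_zpow_pos k
  have h1' : ((m.fdiv (2^t) : ℤ):ℝ) * 2^t ≤ m := by exact_mod_cast h1
  have h2' : (m:ℝ) + 1 ≤ (((m.fdiv (2^t) : ℤ):ℝ) + 1) * 2^t := by
    have h2'' : m + 1 ≤ (m.fdiv (2^t) + 1) * 2^t := h2
    exact_mod_cast h2''
  constructor
  · rw [hzp]
    nlinarith [hx.1, mul_le_mul_of_nonneg_left h1' hp.le]
  · rw [hzp]
    nlinarith [hx.2, mul_le_mul_of_nonneg_left h2' hp.le]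

lemma dy_subset_iff (k m u : ℤ) (t : ℕ) : dy k m ⊆ dy (k+t) u ↔ m.fdiv (2^t) = u := by
  constructor
  · intro h
    by_contra hne
    obtain ⟨x, hx⟩ := dy_nonempty k m
    exact Set.disjoint_left.mp (dy_disj (k+t) hne) (dy_subset k m t hx) (h hx)
  · rintro rfl; exact dy_subset k m t

lemma dy_trichotomy {k l : ℤ} (m u : ℤ) (h : k < l) :
    Disjoint (dy k m) (dy l u) ∨ dy k m ⊆ dyL l u ∨ dy k m ⊆ dyR l u := by
  set t : ℕ := (l - 1 - k).toNat with ht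
  have htz : k + (t:ℤ) = l - 1 := by
    rw [ht, Int.toNat_of_nonneg (by omega)]; ring
  have hsub : dy k m ⊆ dy (l-1) (m.fdiv (2^t)) := by
    rw [← htz]; exact dy_subset k m t
  set w := m.fdiv (2^t) with hw
  rcases eq_or_ne w (2*u) with hwe | hwne
  · exact Or.inr (Or.inl (by rw [dyL, ← hwe]; exact hsub))
  rcases eq_or_ne w (2*u+1) with hwe' | hwne'
  · exact Or.inr (Or.inr (by rw [dyR, ← hwe']; exact hsub))
  refine Or.inl ?_
  have hd : Disjoint (dy (l-1) w) (dy l u) := by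
    rw [dy_union l u]
    exact Set.disjoint_union_right.mpr ⟨dy_disj _ hwne, dy_disj _ hwne'⟩
  exact hd.mono_left hsub

section Haar
variable (σ : Measure ℝ) [IsLocallyFiniteMeasure σ] (k m : ℤ)

def haarA : ℝ :=
  Real.sqrt ((σ (dyL k m)).toReal / ((σ (dy k m)).toReal * (σ (dyR k m)).toReal))
def haarB : ℝ :=
  Real.sqrt ((σ (dyR k m)).toReal / ((σ (dy k m)).toReal * (σ (dyL k m)).toReal))

variable {σ k m}
set_option linter.unusedSectionVars false

lemma measure_dy_lt_top : σ (dy k m) < ⊤ :=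
  lt_of_le_of_lt (measure_mono Set.Ico_subset_Icc_self) measure_Icc_lt_top

lemma measure_dyL_lt_top : σ (dyL k m) < ⊤ :=
  lt_of_le_of_lt (measure_mono (dyL_subset k m)) measure_dy_lt_top

lemma measure_dyR_lt_top : σ (dyR k m) < ⊤ :=
  lt_of_le_of_lt (measure_mono (dyR_subset k m)) measure_dy_lt_top

lemma dyL_mble : MeasurableSet (dyL k m) := dy_mble _ _
lemma dyR_mble : MeasurableSet (dyR k m) := dy_mble _ _

lemma haar_eq (hc : σ (dyL k m) ≠ 0 ∧ σ (dyR k m) ≠ 0) :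
    haarW σ k m = fun x => (dyR k m).indicator (fun _ => haarA σ k m) x
      - (dyL k m).indicator (fun _ => haarB σ k m) x := by
  unfold haarW haarA haarB
  rw [if_pos hc]
  funext x
  simp only [Set.indicator]
  split_ifs <;> simp

lemma haar_zero (hc : ¬(σ (dyL k m) ≠ 0 ∧ σ (dyR k m) ≠ 0)) : haarW σ k m = 0 := by
  unfold haarW; rw [if_neg hc]

lemma haar_support {x : ℝ} (hx : x ∉ dy k m) : haarW σ k m x = 0 := by
  by_cases hc : σ (dyL k m) ≠ 0 ∧ σ (dyR k m) ≠ 0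
  · rw [haar_eq hc]
    have hxL : x ∉ dyL k m := fun h => hx (dyL_subset k m h)
    have hxR : x ∉ dyR k m := fun h => hx (dyR_subset k m h)
    simp [Set.indicator_of_notMem hxL, Set.indicator_of_notMem hxR]
  · rw [haar_zero hc]; rfl

lemma haar_on_L (hc : σ (dyL k m) ≠ 0 ∧ σ (dyR k m) ≠ 0) {x : ℝ} (hx : x ∈ dyL k m) :
    haarW σ k m x = -(haarB σ k m) := by
  rw [haar_eq hc]
  have hxR : x ∉ dyR k m := Set.disjoint_left.mp (dyLR_disj k m) hx
  simp [Set.indicator_of_mem hx, Set.indicator_of_notMem hxR]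

lemma haar_on_R (hc : σ (dyL k m) ≠ 0 ∧ σ (dyR k m) ≠ 0) {x : ℝ} (hx : x ∈ dyR k m) :
    haarW σ k m x = haarA σ k m := by
  rw [haar_eq hc]
  have hxL : x ∉ dyL k m := Set.disjoint_right.mp (dyLR_disj k m) hx
  simp [Set.indicator_of_mem hx, Set.indicator_of_notMem hxL]

lemma measure_dy_split : (σ (dy k m)).toReal
    = (σ (dyL k m)).toReal + (σ (dyR k m)).toReal := by
  rw [dy_union k m, measure_union (dyLR_disj k m) dyR_mble,
    ENNReal.toReal_add measure_dyL_lt_top.ne measure_dyR_lt_top.ne]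

lemma ind_intble (s : Set ℝ) (hs : MeasurableSet s) (hfin : σ s < ⊤) (c : ℝ) :
    Integrable (s.indicator (fun _ => c)) σ :=
  (integrable_indicator_iff hs).2 (integrableOn_const hfin.ne)

lemma haar_integrable : Integrable (haarW σ k m) σ := by
  by_cases hc : σ (dyL k m) ≠ 0 ∧ σ (dyR k m) ≠ 0
  · rw [haar_eq hc]
    exact (ind_intble _ dyR_mble measure_dyR_lt_top _).sub
      (ind_intble _ dyL_mble measure_dyL_lt_top _)
  · rw [haar_zero hc]; exact integrable_zero _ _ _

lemma haar_memℒp : MemLp (haarW σ k m) 2 σ := by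
  by_cases hc : σ (dyL k m) ≠ 0 ∧ σ (dyR k m) ≠ 0
  · rw [haar_eq hc]
    exact (memLp_indicator_const 2 dyR_mble _ (Or.inr measure_dyR_lt_top.ne)).sub
      (memLp_indicator_const 2 dyL_mble _ (Or.inr measure_dyL_lt_top.ne))
  · rw [haar_zero hc]; exact MemLp.zero

lemma haar_pos (hc : σ (dyL k m) ≠ 0 ∧ σ (dyR k m) ≠ 0) :
    0 < (σ (dyL k m)).toReal ∧ 0 < (σ (dyR k m)).toReal := by
  exact ⟨ENNReal.toReal_pos hc.1 measure_dyL_lt_top.ne,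
    ENNReal.toReal_pos hc.2 measure_dyR_lt_top.ne⟩

lemma haar_integral_zero : ∫ x, haarW σ k m x ∂σ = 0 := by
  by_cases hc : σ (dyL k m) ≠ 0 ∧ σ (dyR k m) ≠ 0
  · rw [haar_eq hc]
    rw [integral_sub (ind_intble _ dyR_mble measure_dyR_lt_top _)
        (ind_intble _ dyL_mble measure_dyL_lt_top _),
      integral_indicator_const _ dyR_mble, integral_indicator_const _ dyL_mble,
      smul_eq_mul, smul_eq_mul, measureReal_def, measureReal_def]
    set lL := (σ (dyL k m)).toReal
    set lR := (σ (dyR k m)).toReal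
    set lI := (σ (dy k m)).toReal
    obtain ⟨hL, hR⟩ := haar_pos hc
    have e1 : lR * haarA σ k m = Real.sqrt (lR^2 * (lL/(lI*lR))) := by
      rw [Real.sqrt_mul (sq_nonneg _), Real.sqrt_sq hR.le]; rfl
    have e2 : lL * haarB σ k m = Real.sqrt (lL^2 * (lR/(lI*lL))) := by
      rw [Real.sqrt_mul (sq_nonneg _), Real.sqrt_sq hL.le]; rfl
    rw [e1, e2]
    have hI : 0 < lI := by
      have := measure_dy_split (σ := σ) (k := k) (m := m)
      simp only [lI, lL, lR] at *
      rw [this]; linarith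
    have : lR^2 * (lL/(lI*lR)) = lL^2 * (lR/(lI*lL)) := by
      rw [← mul_div_assoc, ← mul_div_assoc,
        div_eq_div_iff (by positivity) (by positivity)]
      ring
    rw [this, sub_self]
  · rw [haar_zero hc]; simp

lemma haar_sq_integral (hc : σ (dyL k m) ≠ 0 ∧ σ (dyR k m) ≠ 0) :
    ∫ x, (haarW σ k m x)^2 ∂σ = 1 := by
  obtain ⟨hL, hR⟩ := haar_pos hc
  have hI : 0 < (σ (dy k m)).toReal := by
    rw [measure_dy_split]; linarith
  have hptw : ∀ x, (haarW σ k m x)^2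
      = (dyR k m).indicator (fun _ => (haarA σ k m)^2) x
        + (dyL k m).indicator (fun _ => (haarB σ k m)^2) x := by
    intro x
    rw [haar_eq hc]
    by_cases hxR : x ∈ dyR k m
    · have hxL : x ∉ dyL k m := Set.disjoint_right.mp (dyLR_disj k m) hxR
      simp [Set.indicator_of_mem hxR, Set.indicator_of_notMem hxL]
    · by_cases hxL : x ∈ dyL k m
      · simp [Set.indicator_of_mem hxL, Set.indicator_of_notMem hxR]
      · simp [Set.indicator_of_notMem hxR, Set.indicator_of_notMem hxL]
  simp only [hptw]
  rw [integral_add (ind_intble _ dyR_mble measure_dyR_lt_top _)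
      (ind_intble _ dyL_mble measure_dyL_lt_top _),
    integral_indicator_const _ dyR_mble, integral_indicator_const _ dyL_mble,
    smul_eq_mul, smul_eq_mul, measureReal_def, measureReal_def]
  set lL := (σ (dyL k m)).toReal
  set lR := (σ (dyR k m)).toReal
  set lI := (σ (dy k m)).toReal
  have hA : (haarA σ k m)^2 = lL / (lI * lR) :=
    Real.sq_sqrt (by positivity)
  have hB : (haarB σ k m)^2 = lR / (lI * lL) :=
    Real.sq_sqrt (by positivity)
  rw [hA, hB]
  have hsplit : lI = lL + lR := measure_dy_split
  rw [hsplit]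
  field_simp

lemma haar_ortho_le {k m l u : ℤ} (hkl : k ≤ l) (h : (k,m) ≠ (l,u)) :
    ∫ x, haarW σ k m x * haarW σ l u x ∂σ = 0 := by
  rcases eq_or_lt_of_le hkl with rfl | hlt
  · have hmu : m ≠ u := by simpa using h
    have hz : ∀ x, haarW σ k m x * haarW σ k u x = 0 := by
      intro x
      by_cases hx : x ∈ dy k m
      · rw [haar_support (Set.disjoint_left.mp (dy_disj k hmu) hx), mul_zero]
      · rw [haar_support hx, zero_mul]
    simp only [hz, integral_zero]
  · by_cases hc : σ (dyL l u) ≠ 0 ∧ σ (dyR l u) ≠ 0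
    · rcases dy_trichotomy m u hlt with hd | hsub | hsub
      · have hz : ∀ x, haarW σ k m x * haarW σ l u x = 0 := by
          intro x
          by_cases hx : x ∈ dy k m
          · rw [haar_support (Set.disjoint_left.mp hd hx), mul_zero]
          · rw [haar_support hx, zero_mul]
        simp only [hz, integral_zero]
      · have hptw : ∀ x, haarW σ k m x * haarW σ l u x
            = (-(haarB σ l u)) * haarW σ k m x := by
          intro x
          by_cases hx : x ∈ dy k m
          · rw [haar_on_L hc (hsub hx)]; ring
          · rw [haar_support hx]; ring
        simp only [hptw]
        rw [integral_const_mul, haar_integral_zero, mul_zero]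
      · have hptw : ∀ x, haarW σ k m x * haarW σ l u x
            = (haarA σ l u) * haarW σ k m x := by
          intro x
          by_cases hx : x ∈ dy k m
          · rw [haar_on_R hc (hsub hx)]; ring
          · rw [haar_support hx]; ring
        simp only [hptw]
        rw [integral_const_mul, haar_integral_zero, mul_zero]
    · rw [haar_zero hc]
      simp

lemma haar_ortho {k m l u : ℤ} (h : (k,m) ≠ (l,u)) :
    ∫ x, haarW σ k m x * haarW σ l u x ∂σ = 0 := by
  rcases le_total k l with hkl | hlk
  · exact haar_ortho_le hkl h
  · have := haar_ortho_le (σ := σ) hlk (fun hh => h (by simpa using hh.symm))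
    rw [← this]
    congr 1
    funext x
    ring

end Haar

section Bessel2
variable {σ : Measure ℝ} [IsLocallyFiniteMeasure σ]

lemma inner_toLp_haar (f : ℝ → ℝ) (hf : MemLp f 2 σ) (k m : ℤ) :
    (inner ℝ (hf.toLp f) (MemLp.toLp (haarW σ k m) haar_memℒp) : ℝ)
      = ip σ f (haarW σ k m) := by
  rw [MeasureTheory.L2.inner_def]
  apply integral_congr_ae
  filter_upwards [hf.coeFn_toLp, (haar_memℒp (σ := σ) (k := k) (m := m)).coeFn_toLp]
    with x h1 h2
  rw [h1, h2]
  simp [RCLike.inner_apply, mul_comm]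

lemma norm_toLp_sq (f : ℝ → ℝ) (hf : MemLp f 2 σ) :
    ‖hf.toLp f‖^2 = ∫ x, f x ^ 2 ∂σ := by
  rw [← real_inner_self_eq_norm_sq, MeasureTheory.L2.inner_def]
  apply integral_congr_ae
  filter_upwards [hf.coeFn_toLp] with x h1
  rw [h1]
  simp [RCLike.inner_apply, pow_two]

lemma bessel (f : ℝ → ℝ) (hf : MemLp f 2 σ) (S : Finset (ℤ × ℤ)) :
    ∑ p ∈ S, (ip σ f (haarW σ p.1 p.2))^2 ≤ ∫ x, f x ^ 2 ∂σ := by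
  classical
  have hvanish : ∀ p ∈ S, (ip σ f (haarW σ p.1 p.2))^2 ≠ 0 →
      (σ (dyL p.1 p.2) ≠ 0 ∧ σ (dyR p.1 p.2) ≠ 0) := by
    intro p _ hne
    by_contra hcon
    apply hne
    rw [haar_zero hcon]
    simp [ip]
  rw [← Finset.sum_filter_of_ne hvanish]
  set Sg := S.filter (fun p => σ (dyL p.1 p.2) ≠ 0 ∧ σ (dyR p.1 p.2) ≠ 0) with hSg
  set v : {p : ℤ × ℤ // σ (dyL p.1 p.2) ≠ 0 ∧ σ (dyR p.1 p.2) ≠ 0} → Lp ℝ 2 σ :=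
    fun p => MemLp.toLp (haarW σ p.1.1 p.1.2) haar_memℒp with hv
  have hinner : ∀ p q, (inner ℝ (v p) (v q) : ℝ)
      = ∫ x, haarW σ p.1.1 p.1.2 x * haarW σ q.1.1 q.1.2 x ∂σ := by
    intro p q
    rw [MeasureTheory.L2.inner_def]
    apply integral_congr_ae
    filter_upwards [(haar_memℒp (σ := σ) (k := p.1.1) (m := p.1.2)).coeFn_toLp,
      (haar_memℒp (σ := σ) (k := q.1.1) (m := q.1.2)).coeFn_toLp] with x h1 h2
    rw [hv]
    simp only []
    rw [h1, h2]
    simp [RCLike.inner_apply, mul_comm]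
  have hortho : Orthonormal ℝ v := by
    rw [orthonormal_iff_ite]
    intro p q
    by_cases hpq : p = q
    · subst hpq
      rw [if_pos rfl, hinner]
      have := haar_sq_integral (σ := σ) p.2
      simpa [pow_two] using this
    · rw [if_neg hpq, hinner]
      apply haar_ortho
      intro hh
      apply hpq
      apply Subtype.ext
      exact Prod.ext (congrArg Prod.fst hh) (congrArg Prod.snd hh)
  have hmap : ∀ p ∈ Sg, σ (dyL p.1 p.2) ≠ 0 ∧ σ (dyR p.1 p.2) ≠ 0 :=
    fun p hp => (Finset.mem_filter.mp hp).2
  have hinj : Function.Injective (fun p : Sg =>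
      (⟨p.1, hmap p.1 p.2⟩ : {p : ℤ × ℤ // σ (dyL p.1 p.2) ≠ 0 ∧ σ (dyR p.1 p.2) ≠ 0})) := by
    intro a b hab; have h := congrArg Subtype.val hab; exact Subtype.ext h
  set t : Finset {p : ℤ × ℤ // σ (dyL p.1 p.2) ≠ 0 ∧ σ (dyR p.1 p.2) ≠ 0} :=
    Sg.attach.map ⟨fun p => ⟨p.1, hmap p.1 p.2⟩,
      hinj⟩ with ht
  have hb := Orthonormal.sum_inner_products_le (𝕜 := ℝ) (s := t) (hf.toLp f) hortho
  have hL : ∑ i ∈ t, ‖(inner ℝ (v i) (hf.toLp f) : ℝ)‖^2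
      = ∑ p ∈ Sg, (ip σ f (haarW σ p.1 p.2))^2 := by
    rw [ht, Finset.sum_map]
    rw [← Finset.sum_attach Sg (fun p => (ip σ f (haarW σ p.1 p.2))^2)]
    apply Finset.sum_congr rfl
    intro p _
    rw [real_inner_comm]
    simp only [Function.Embedding.coeFn_mk]
    rw [hv]
    simp only []
    rw [inner_toLp_haar f hf]
    rw [Real.norm_eq_abs, sq_abs]
  rw [hL] at hb
  calc ∑ p ∈ Sg, (ip σ f (haarW σ p.1 p.2))^2 ≤ ‖hf.toLp f‖^2 := hb
    _ = ∫ x, f x ^ 2 ∂σ := norm_toLp_sq f hf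

end Bessel2


section Counting

lemma card_Ico_pow (M : ℤ) (N : ℕ) : (Finset.Ico M (M + 2^N)).card = 2^N := by
  rw [Int.card_Ico]
  have : M + (2:ℤ)^N - M = ((2^N : ℕ) : ℤ) := by push_cast; ring
  rw [this, Int.toNat_natCast]

lemma sum_sq_fiber_bound {W : ℝ} (E : Finset ((ℤ × ℤ) × (ℤ × ℤ)))
    (φ : (ℤ × ℤ) × (ℤ × ℤ) → ℤ × ℤ) (ψ : (ℤ × ℤ) × (ℤ × ℤ) → ℤ) (N : ℕ)
    (hcount : ∀ q ∈ E, ∀ q' ∈ E, φ q = φ q' → ψ q = ψ q' → q = q')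
    (hrange : ∀ p : ℤ × ℤ, ∃ M : ℤ, ∀ q ∈ E, φ q = p → M ≤ ψ q ∧ ψ q < M + 2^N)
    (w : ℤ × ℤ → ℝ) (hw : ∀ S : Finset (ℤ × ℤ), ∑ p ∈ S, (w p)^2 ≤ W) :
    ∑ q ∈ E, (w (φ q))^2 ≤ 2^N * W := by
  classical
  rw [← Finset.sum_fiberwise_of_maps_to
      (fun q hq => Finset.mem_image_of_mem φ hq) (fun q => (w (φ q))^2)]
  have hfiber : ∀ p ∈ E.image φ,
      ∑ q ∈ E.filter (fun q => φ q = p), (w (φ q))^2 ≤ (2^N : ℝ) * (w p)^2 := by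
    intro p hp
    have hcongr : ∀ q ∈ E.filter (fun q => φ q = p), (w (φ q))^2 = (w p)^2 := by
      intro q hq
      rw [(Finset.mem_filter.mp hq).2]
    rw [Finset.sum_congr rfl hcongr, Finset.sum_const, nsmul_eq_mul]
    have hcard : (E.filter (fun q => φ q = p)).card ≤ 2^N := by
      obtain ⟨M, hM⟩ := hrange p
      have h1 := Finset.card_le_card_of_injOn
        (s := E.filter (fun q => φ q = p)) (t := Finset.Ico M (M + 2^N)) ψ
        (fun q hq => by
          obtain ⟨hqE, hqp⟩ := Finset.mem_filter.mp hq
          exact Finset.mem_Ico.mpr ⟨(hM q hqE hqp).1, (hM q hqE hqp).2⟩)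
        (fun q hq q' hq' hψ => by
          simp only [Finset.coe_filter, Set.mem_setOf_eq] at hq hq'
          exact hcount q hq.1 q' hq'.1 (hq.2.trans hq'.2.symm) hψ)
      rwa [card_Ico_pow] at h1
    have hcardR : ((E.filter (fun q => φ q = p)).card : ℝ) ≤ (2^N : ℝ) := by
      exact_mod_cast hcard
    exact mul_le_mul_of_nonneg_right hcardR (sq_nonneg _)
  refine le_trans (Finset.sum_le_sum hfiber) ?_
  rw [← Finset.mul_sum]
  exact mul_le_mul_of_nonneg_left (hw _) (by positivity)

end Counting

section Arith

lemma nat_band_ineq (r : ℕ) : (2*r+1) * 2^r + 1 ≤ 2^(2*r+1) := by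
  have h : 2*r+1 < 2^(r+1) := by
    induction r with
    | zero => norm_num
    | succ n ih =>
        have h2 : 2 ≤ 2^(n+1) := Nat.one_lt_two_pow_iff.mpr (Nat.succ_ne_zero n)
        have : 2^(n+2) = 2^(n+1) + 2^(n+1) := by rw [pow_succ]; ring
        omega
  have h1 : (2*r+1)*2^r + 2^r ≤ 2^(r+1)*2^r := by
    have := Nat.mul_le_mul_right (2^r) h
    nlinarith [this]
  have h2 : (1:ℕ) ≤ 2^r := Nat.one_le_two_pow
  have h3 : 2^(r+1)*2^r = 2^(2*r+1) := by
    rw [← pow_add]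
    congr 1
    omega
  omega

lemma real_band_ineq (r : ℕ) : ((2*r+1 : ℕ) : ℝ) * 2^r ≤ 2^(2*r+1) - 1 := by
  have := nat_band_ineq r
  have h : (((2*r+1) * 2^r + 1 : ℕ) : ℝ) ≤ ((2^(2*r+1) : ℕ) : ℝ) := by exact_mod_cast this
  push_cast at h ⊢
  linarith

lemma sum_zpow_Icc (r : ℕ) :
    ∑ d ∈ Finset.Icc (-(r:ℤ)) (r:ℤ), (2:ℝ)^((r:ℤ)-d) = 2^(2*r+1) - 1 := by
  have hbij := Finset.sum_nbij' (s := Finset.Icc (-(r:ℤ)) (r:ℤ))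
    (t := Finset.range (2*r+1))
    (f := fun d => (2:ℝ)^((r:ℤ)-d)) (g := fun n => (2:ℝ)^n)
    (fun d => ((r:ℤ)-d).toNat) (fun n => (r:ℤ) - n)
    (by intro d hd; rw [Finset.mem_Icc] at hd; rw [Finset.mem_range]; omega)
    (by intro n hn; rw [Finset.mem_range] at hn; rw [Finset.mem_Icc]; omega)
    (by intro d hd; rw [Finset.mem_Icc] at hd; omega)
    (by intro n hn; rw [Finset.mem_range] at hn; omega)
    (by
      intro d hd
      rw [Finset.mem_Icc] at hd
      rw [← zpow_natCast (2:ℝ), Int.toNat_of_nonneg (by omega)])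
  rw [hbij, geom_sum_eq (by norm_num : (2:ℝ) ≠ 1)]
  norm_num

lemma sqrt_mul_sqrt_le (x y : ℝ) (hx : 0 ≤ x) (hy : 0 ≤ y) :
    Real.sqrt x * Real.sqrt y ≤ (x + y) / 2 := by
  nlinarith [sq_nonneg (Real.sqrt x - Real.sqrt y), Real.sq_sqrt hx, Real.sq_sqrt hy]

end Arith


section Layer
variable {σ ω : Measure ℝ} [IsLocallyFiniteMeasure σ] [IsLocallyFiniteMeasure ω]

lemma nrm_sq (μ : Measure ℝ) (f : ℝ → ℝ) : (nrm μ f)^2 = ∫ x, f x^2 ∂μ :=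
  Real.sq_sqrt (integral_nonneg fun x => sq_nonneg _)

lemma nrm_nonneg (μ : Measure ℝ) (f : ℝ → ℝ) : 0 ≤ nrm μ f := Real.sqrt_nonneg _

lemma layer_bound (f g : ℝ → ℝ) (hf : MemLp f 2 σ) (hg : MemLp g 2 ω)
    (r : ℕ) (d : ℤ) (hd1 : -(r:ℤ) ≤ d) (hd2 : d ≤ (r:ℤ))
    (E : Finset ((ℤ × ℤ) × (ℤ × ℤ)))
    (hsub : ∀ q ∈ E, Int.fdiv q.2.2 (2^(((r:ℤ)-d).toNat)) = Int.fdiv q.1.2 (2^r))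
    (hsh : ∀ q ∈ E, q.2.1 = q.1.1 + d) :
    ∑ q ∈ E, |ip σ f (haarW σ q.1.1 q.1.2)| * |ip ω g (haarW ω q.2.1 q.2.2)|
      ≤ ((2:ℝ)^((r:ℤ)-d) + (2:ℝ)^((r:ℕ):ℤ))/2 * (nrm σ f * nrm ω g) := by
  classical
  set t1 : ℕ := ((r:ℤ)-d).toNat with ht1d
  have ht1 : (t1:ℤ) = (r:ℤ) - d := Int.toNat_of_nonneg (by omega)
  -- the A-side counting hypotheses
  have hcountA : ∀ q ∈ E, ∀ q' ∈ E, q.1 = q'.1 → q.2.2 = q'.2.2 → q = q' := by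
    intro q hq q' hq' hφ hψ
    have e1 := hsh q hq
    have e2 := hsh q' hq'
    rcases q with ⟨⟨k, m⟩, l, u⟩
    rcases q' with ⟨⟨k', m'⟩, l', u'⟩
    simp only [Prod.mk.injEq] at hφ hψ e1 e2 ⊢
    exact ⟨hφ, by omega, hψ⟩
  have hrangeA : ∀ p : ℤ × ℤ, ∃ M : ℤ, ∀ q ∈ E, q.1 = p →
      M ≤ q.2.2 ∧ q.2.2 < M + 2^t1 := by
    intro p
    refine ⟨(Int.fdiv p.2 (2^r)) * 2^t1, ?_⟩
    intro q hq hfst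
    have h1 := hsub q hq
    rw [hfst] at h1
    obtain ⟨hb1, hb2⟩ := fdiv_bounds q.2.2 t1
    rw [h1] at hb1 hb2
    exact ⟨hb1, by nlinarith [hb2]⟩
  have hwA : ∀ S : Finset (ℤ × ℤ), ∑ p ∈ S, (|ip σ f (haarW σ p.1 p.2)|)^2
      ≤ (nrm σ f)^2 := by
    intro S
    have hcg : ∀ p ∈ S, (|ip σ f (haarW σ p.1 p.2)|)^2 = (ip σ f (haarW σ p.1 p.2))^2 :=
      fun p _ => sq_abs _
    rw [Finset.sum_congr rfl hcg, nrm_sq σ f]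
    exact bessel f hf S
  have hA := sum_sq_fiber_bound E Prod.fst (fun q => q.2.2) t1 hcountA hrangeA
    (fun p => |ip σ f (haarW σ p.1 p.2)|) hwA
  -- the B-side counting hypotheses
  have hcountB : ∀ q ∈ E, ∀ q' ∈ E, q.2 = q'.2 → q.1.2 = q'.1.2 → q = q' := by
    intro q hq q' hq' hφ hψ
    have e1 := hsh q hq
    have e2 := hsh q' hq'
    rcases q with ⟨⟨k, m⟩, l, u⟩
    rcases q' with ⟨⟨k', m'⟩, l', u'⟩
    simp only [Prod.mk.injEq] at hφ hψ e1 e2 ⊢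
    exact ⟨⟨by omega, hψ⟩, hφ⟩
  have hrangeB : ∀ p : ℤ × ℤ, ∃ M : ℤ, ∀ q ∈ E, q.2 = p →
      M ≤ q.1.2 ∧ q.1.2 < M + 2^r := by
    intro p
    refine ⟨(Int.fdiv p.2 (2^t1)) * 2^r, ?_⟩
    intro q hq hsnd
    have h1 := (hsub q hq).symm
    rw [hsnd] at h1
    obtain ⟨hb1, hb2⟩ := fdiv_bounds q.1.2 r
    rw [h1] at hb1 hb2
    exact ⟨hb1, by nlinarith [hb2]⟩
  have hwB : ∀ S : Finset (ℤ × ℤ), ∑ p ∈ S, (|ip ω g (haarW ω p.1 p.2)|)^2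
      ≤ (nrm ω g)^2 := by
    intro S
    have hcg : ∀ p ∈ S, (|ip ω g (haarW ω p.1 p.2)|)^2 = (ip ω g (haarW ω p.1 p.2))^2 :=
      fun p _ => sq_abs _
    rw [Finset.sum_congr rfl hcg, nrm_sq ω g]
    exact bessel g hg S
  have hB := sum_sq_fiber_bound E Prod.snd (fun q => q.1.2) r hcountB hrangeB
    (fun p => |ip ω g (haarW ω p.1 p.2)|) hwB
  -- Cauchy-Schwarz and combination
  have hcs := Real.sum_mul_le_sqrt_mul_sqrt E
    (fun q => |ip σ f (haarW σ q.1.1 q.1.2)|) (fun q => |ip ω g (haarW ω q.2.1 q.2.2)|)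
  have hF : 0 ≤ nrm σ f := nrm_nonneg σ f
  have hG : 0 ≤ nrm ω g := nrm_nonneg ω g
  have e1 : Real.sqrt (∑ q ∈ E, |ip σ f (haarW σ q.1.1 q.1.2)|^2)
      ≤ Real.sqrt ((2^t1 : ℝ) * (nrm σ f)^2) := Real.sqrt_le_sqrt hA
  have e2 : Real.sqrt (∑ q ∈ E, |ip ω g (haarW ω q.2.1 q.2.2)|^2)
      ≤ Real.sqrt ((2^r : ℝ) * (nrm ω g)^2) := Real.sqrt_le_sqrt hB
  have e3 : Real.sqrt ((2^t1 : ℝ) * (nrm σ f)^2) = Real.sqrt (2^t1) * nrm σ f := by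
    rw [Real.sqrt_mul (by positivity), Real.sqrt_sq hF]
  have e4 : Real.sqrt ((2^r : ℝ) * (nrm ω g)^2) = Real.sqrt (2^r) * nrm ω g := by
    rw [Real.sqrt_mul (by positivity), Real.sqrt_sq hG]
  calc ∑ q ∈ E, |ip σ f (haarW σ q.1.1 q.1.2)| * |ip ω g (haarW ω q.2.1 q.2.2)|
      ≤ Real.sqrt (∑ q ∈ E, |ip σ f (haarW σ q.1.1 q.1.2)|^2)
        * Real.sqrt (∑ q ∈ E, |ip ω g (haarW ω q.2.1 q.2.2)|^2) := hcs
    _ ≤ Real.sqrt ((2^t1 : ℝ) * (nrm σ f)^2) * Real.sqrt ((2^r : ℝ) * (nrm ω g)^2) :=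
        mul_le_mul e1 e2 (Real.sqrt_nonneg _) (Real.sqrt_nonneg _)
    _ = (Real.sqrt (2^t1) * Real.sqrt (2^r)) * (nrm σ f * nrm ω g) := by
        rw [e3, e4]; ring
    _ ≤ (((2:ℝ)^t1 + (2:ℝ)^r)/2) * (nrm σ f * nrm ω g) := by
        apply mul_le_mul_of_nonneg_right
          (sqrt_mul_sqrt_le _ _ (by positivity) (by positivity)) (mul_nonneg hF hG)
    _ = ((2:ℝ)^((r:ℤ)-d) + (2:ℝ)^((r:ℕ):ℤ))/2 * (nrm σ f * nrm ω g) := by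
        rw [← zpow_natCast (2:ℝ) t1, ht1, ← zpow_natCast (2:ℝ) r]

end Layer

/-- Diagonal band estimate: if the Haar coefficient pairings of `T` in the diagonal band
`2^{-r}|I| ≤ |J| ≤ 2^r|I|`, `J ⊆ I^{(r)}` are bounded by `C₃`, then the full band sum is
controlled by `(2^{2r+1} - 1) C₃ ‖f‖_{L²(σ)} ‖g‖_{L²(ω)}` (stated for arbitrary finite
partial sums of the band sum of nonnegative terms). -/
theorem diagonal_band_estimate (σ ω : Measure ℝ)
    [IsLocallyFiniteMeasure σ] [IsLocallyFiniteMeasure ω]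
    (P : FormalPair σ ω) (r : ℕ) (C₃ : ℝ)
    (hband : ∀ k m l u : ℤ, (2:ℝ)^(-(r:ℤ)) * (2:ℝ)^k ≤ (2:ℝ)^l → (2:ℝ)^l ≤ (2:ℝ)^(r:ℤ) * (2:ℝ)^k →
      dy l u ⊆ dyUp r k m →
      |ip ω (P.T (haarW σ k m)) (haarW ω l u)| ≤ C₃)
    (f : ℝ → ℝ) (hf : MemLp f 2 σ) (g : ℝ → ℝ) (hg : MemLp g 2 ω) :
    ∀ s : Finset ((ℤ × ℤ) × (ℤ × ℤ)),
      ∑ q ∈ s,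
        Set.indicator {q : (ℤ × ℤ) × (ℤ × ℤ) |
            (2:ℝ)^(-(r:ℤ)) * (2:ℝ)^q.1.1 ≤ (2:ℝ)^q.2.1 ∧ (2:ℝ)^q.2.1 ≤ (2:ℝ)^(r:ℤ) * (2:ℝ)^q.1.1 ∧
            dy q.2.1 q.2.2 ⊆ dyUp r q.1.1 q.1.2}
          (fun q => |ip σ f (haarW σ q.1.1 q.1.2)| * |ip ω g (haarW ω q.2.1 q.2.2)| *
            |ip ω (P.T (haarW σ q.1.1 q.1.2)) (haarW ω q.2.1 q.2.2)|) q
      ≤ ((2:ℝ)^(2*r+1) - 1) * C₃ * (nrm σ f * nrm ω g) := by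
  have hC : 0 ≤ C₃ := by
    refine le_trans (abs_nonneg _) (hband 0 0 0 0 ?_ ?_ ?_)
    · rw [← zpow_add₀ (two_ne_zero : (2:ℝ) ≠ 0)]
      exact (zpow_le_zpow_iff_right₀ (one_lt_two : (1:ℝ) < 2)).mpr (by omega)
    · rw [← zpow_add₀ (two_ne_zero : (2:ℝ) ≠ 0)]
      exact (zpow_le_zpow_iff_right₀ (one_lt_two : (1:ℝ) < 2)).mpr (by omega)
    · exact dy_subset 0 0 r
  intro s
  classical
  set Band : Set ((ℤ × ℤ) × (ℤ × ℤ)) := {q : (ℤ × ℤ) × (ℤ × ℤ) |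
      (2:ℝ)^(-(r:ℤ)) * (2:ℝ)^q.1.1 ≤ (2:ℝ)^q.2.1 ∧ (2:ℝ)^q.2.1 ≤ (2:ℝ)^(r:ℤ) * (2:ℝ)^q.1.1 ∧
      dy q.2.1 q.2.2 ⊆ dyUp r q.1.1 q.1.2} with hBand
  set Func : (ℤ × ℤ) × (ℤ × ℤ) → ℝ :=
    (fun q => |ip σ f (haarW σ q.1.1 q.1.2)| * |ip ω g (haarW ω q.2.1 q.2.2)| *
      |ip ω (P.T (haarW σ q.1.1 q.1.2)) (haarW ω q.2.1 q.2.2)|) with hFunc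
  have hrw : ∑ q ∈ s, Band.indicator Func q
      = ∑ q ∈ s.filter (fun q => q ∈ Band), Func q := by
    rw [Finset.sum_filter]
    exact Finset.sum_congr rfl fun q _ => Set.indicator_apply Band Func q
  rw [hrw]
  set E := s.filter (fun q => q ∈ Band) with hE
  have hEband : ∀ q ∈ E,
      (2:ℝ)^(-(r:ℤ)) * (2:ℝ)^q.1.1 ≤ (2:ℝ)^q.2.1 ∧ (2:ℝ)^q.2.1 ≤ (2:ℝ)^(r:ℤ) * (2:ℝ)^q.1.1 ∧
      dy q.2.1 q.2.2 ⊆ dyUp r q.1.1 q.1.2 := by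
    intro q hq
    have := (Finset.mem_filter.mp hq).2
    rw [hBand, Set.mem_setOf_eq] at this
    exact this
  have hshift : ∀ q ∈ E, q.2.1 - q.1.1 ∈ Finset.Icc (-(r:ℤ)) (r:ℤ) := by
    intro q hq
    obtain ⟨h1, h2, h3⟩ := hEband q hq
    rw [Finset.mem_Icc]
    constructor
    · have h1' : (2:ℝ)^(-(r:ℤ) + q.1.1) ≤ (2:ℝ)^q.2.1 := by
        rw [zpow_add₀ (two_ne_zero : (2:ℝ) ≠ 0)]; exact h1
      have := (zpow_le_zpow_iff_right₀ (one_lt_two : (1:ℝ) < 2)).mp h1'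
      omega
    · have h2' : (2:ℝ)^q.2.1 ≤ (2:ℝ)^((r:ℤ) + q.1.1) := by
        rw [zpow_add₀ (two_ne_zero : (2:ℝ) ≠ 0)]; exact h2
      have := (zpow_le_zpow_iff_right₀ (one_lt_two : (1:ℝ) < 2)).mp h2'
      omega
  rw [← Finset.sum_fiberwise_of_maps_to hshift Func]
  have hlayer : ∀ d ∈ Finset.Icc (-(r:ℤ)) (r:ℤ),
      ∑ q ∈ E.filter (fun q => q.2.1 - q.1.1 = d), Func q
        ≤ C₃ * (((2:ℝ)^((r:ℤ)-d) + (2:ℝ)^((r:ℕ):ℤ))/2 * (nrm σ f * nrm ω g)) := by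
    intro d hd
    rw [Finset.mem_Icc] at hd
    set Ed := E.filter (fun q => q.2.1 - q.1.1 = d) with hEd
    have hEdsh : ∀ q ∈ Ed, q.2.1 = q.1.1 + d := by
      intro q hq
      have := (Finset.mem_filter.mp hq).2
      omega
    have hEdsub : ∀ q ∈ Ed,
        Int.fdiv q.2.2 (2^(((r:ℤ)-d).toNat)) = Int.fdiv q.1.2 (2^r) := by
      intro q hq
      have hqE := (Finset.mem_filter.mp hq).1
      obtain ⟨h1, h2, h3⟩ := hEband q hqE
      have hsh := hEdsh q hq
      have ht1 : ((((r:ℤ)-d).toNat : ℤ)) = (r:ℤ) - d := Int.toNat_of_nonneg (by omega)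
      have h3' : dy q.2.1 q.2.2
          ⊆ dy (q.2.1 + (((r:ℤ)-d).toNat : ℤ)) (Int.fdiv q.1.2 (2^r)) := by
        have heq : q.2.1 + ((((r:ℤ)-d).toNat : ℤ)) = q.1.1 + (r:ℤ) := by omega
        rw [heq]
        exact h3
      exact (dy_subset_iff q.2.1 q.2.2 (Int.fdiv q.1.2 (2^r)) (((r:ℤ)-d).toNat)).mp h3'
    have hstep1 : ∑ q ∈ Ed, Func q
        ≤ C₃ * ∑ q ∈ Ed, |ip σ f (haarW σ q.1.1 q.1.2)| * |ip ω g (haarW ω q.2.1 q.2.2)| := by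
      rw [Finset.mul_sum]
      apply Finset.sum_le_sum
      intro q hq
      have hqE := (Finset.mem_filter.mp hq).1
      obtain ⟨h1, h2, h3⟩ := hEband q hqE
      have hc3 := hband q.1.1 q.1.2 q.2.1 q.2.2 h1 h2 h3
      have hab : 0 ≤ |ip σ f (haarW σ q.1.1 q.1.2)| * |ip ω g (haarW ω q.2.1 q.2.2)| :=
        mul_nonneg (abs_nonneg _) (abs_nonneg _)
      rw [hFunc]
      dsimp only
      calc |ip σ f (haarW σ q.1.1 q.1.2)| * |ip ω g (haarW ω q.2.1 q.2.2)| *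
            |ip ω (P.T (haarW σ q.1.1 q.1.2)) (haarW ω q.2.1 q.2.2)|
          ≤ |ip σ f (haarW σ q.1.1 q.1.2)| * |ip ω g (haarW ω q.2.1 q.2.2)| * C₃ :=
            mul_le_mul_of_nonneg_left hc3 hab
        _ = C₃ * (|ip σ f (haarW σ q.1.1 q.1.2)| * |ip ω g (haarW ω q.2.1 q.2.2)|) := by
            ring
    refine le_trans hstep1 (mul_le_mul_of_nonneg_left ?_ hC)
    exact layer_bound f g hf hg r d hd.1 hd.2 Ed hEdsub hEdsh
  refine le_trans (Finset.sum_le_sum hlayer) ?_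
  have hFG : 0 ≤ nrm σ f * nrm ω g := mul_nonneg (nrm_nonneg σ f) (nrm_nonneg ω g)
  have hdist : ∀ d ∈ Finset.Icc (-(r:ℤ)) (r:ℤ),
      C₃ * (((2:ℝ)^((r:ℤ)-d) + (2:ℝ)^((r:ℕ):ℤ))/2 * (nrm σ f * nrm ω g))
      = C₃ * (nrm σ f * nrm ω g) / 2 * (2:ℝ)^((r:ℤ)-d)
        + C₃ * (nrm σ f * nrm ω g) / 2 * (2:ℝ)^((r:ℕ):ℤ) := by
    intro d _
    ring
  rw [Finset.sum_congr rfl hdist, Finset.sum_add_distrib, ← Finset.mul_sum, ← Finset.mul_sum,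
    sum_zpow_Icc, Finset.sum_const, Int.card_Icc]
  have hcard : ((r:ℤ) + 1 - -(r:ℤ)).toNat = 2*r+1 := by omega
  rw [hcard, nsmul_eq_mul]
  have hz : (2:ℝ)^((r:ℕ):ℤ) = 2^(r:ℕ) := zpow_natCast 2 r
  have hBS : ((2*r+1:ℕ):ℝ) * (2:ℝ)^((r:ℕ):ℤ) ≤ (2:ℝ)^(2*r+1) - 1 := by
    rw [hz]; exact real_band_ineq r
  have key : 0 ≤ (C₃ * (nrm σ f * nrm ω g))
      * (((2:ℝ)^(2*r+1) - 1) - ((2*r+1:ℕ):ℝ) * (2:ℝ)^((r:ℕ):ℤ)) :=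
    mul_nonneg (mul_nonneg hC hFG) (by linarith)
  nlinarith [key]

end
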